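/- Let (Δₜ)_{t≥0} be a nonnegative sequence satisfying Δ_{t+1} ≤ (1 - γₜ)Δₜ + K·γₜ^(3/2) for all t ≥ 0, where γₜ = 2/(t+3) and K > 0. Then for every T ≥ 1, Δ_T ≤ 2Δ₀/((T+2)(T+1)) + K·(4√2/3)·(T+3)^(3/2)/((T+2)(T+1)). -/

import Mathlib

lemma rpow32_eq (x : ℝ) (hx : 0 ≤ x) : x ^ ((3:ℝ)/2) = x * Real.sqrt x := by
  rw [Real.sqrt_eq_rpow, ← Real.rpow_one_add' hx (by norm_num)]
  norm_num

lemma key_step (T : ℕ) :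
    ((T:ℝ) + 2) / Real.sqrt ((T:ℝ) + 3) ≤
      (2/3) * (((T:ℝ) + 4) * Real.sqrt ((T:ℝ) + 4) - ((T:ℝ) + 3) * Real.sqrt ((T:ℝ) + 3)) := by
  set s := Real.sqrt ((T:ℝ) + 3) with hs
  set u := Real.sqrt ((T:ℝ) + 4) with hu
  have hs2 : s ^ 2 = (T:ℝ) + 3 := Real.sq_sqrt (by positivity)
  have hu2 : u ^ 2 = (T:ℝ) + 4 := Real.sq_sqrt (by positivity)
  have hs1 : 1 ≤ s := by
    rw [hs, show (1:ℝ) = Real.sqrt 1 by simp]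
    exact Real.sqrt_le_sqrt (by linarith [(Nat.cast_nonneg T : (0:ℝ) ≤ T)])
  have hspos : 0 < s := by linarith
  have hupos : 0 < u := Real.sqrt_pos.mpr (by positivity)
  have husq : u ^ 2 = s ^ 2 + 1 := by rw [hs2, hu2]; ring
  rw [div_le_iff₀ hspos]
  have h2 : (T:ℝ) + 2 = s^2 - 1 := by rw [hs2]; ring
  have h3 : ((T:ℝ) + 3) = s^2 := hs2.symm
  have h4 : ((T:ℝ) + 4) = u^2 := hu2.symm
  rw [h2, h3, h4]
  nlinarith [sq_nonneg (2*s*u*(s^2+1) - (2*s^4 + 3*s^2 - 3)), sq_nonneg (u - s),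
    mul_pos hspos hupos, sq_nonneg (s*u), sq_nonneg (s^2 - 1),
    mul_pos (mul_pos hspos hspos) hupos]

theorem sublinear_convergence_recursion
    (Δ : ℕ → ℝ) (K : ℝ) (hK : 0 < K)
    (hnonneg : ∀ t, 0 ≤ Δ t)
    (hrec : ∀ t : ℕ, Δ (t + 1) ≤ (1 - 2 / ((t : ℝ) + 3)) * Δ t +
      K * (2 / ((t : ℝ) + 3)) ^ ((3 : ℝ) / 2)) :
    ∀ T : ℕ, 1 ≤ T →
      Δ T ≤ 2 * Δ 0 / (((T : ℝ) + 2) * ((T : ℝ) + 1)) +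
        K * (4 * Real.sqrt 2 / 3) * ((T : ℝ) + 3) ^ ((3 : ℝ) / 2) /
          (((T : ℝ) + 2) * ((T : ℝ) + 1)) := by
  have sqrt2 : (0:ℝ) ≤ Real.sqrt 2 := Real.sqrt_nonneg 2
  have sqrt3 : (0:ℝ) ≤ Real.sqrt 3 := Real.sqrt_nonneg 3
  have H : ∀ T : ℕ, ((T:ℝ) + 2) * ((T:ℝ) + 1) * Δ T ≤
      2 * Δ 0 + K * (4 * Real.sqrt 2 / 3) *
        (((T:ℝ) + 3) * Real.sqrt ((T:ℝ) + 3) - 3 * Real.sqrt 3) := by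
    intro T
    induction T with
    | zero =>
      have h0 : ((0:ℕ):ℝ) + 3 = 3 := by norm_num
      rw [h0]
      have : (3:ℝ) * Real.sqrt 3 - 3 * Real.sqrt 3 = 0 := by ring
      rw [this, mul_zero]
      push_cast
      linarith [hnonneg 0]
    | succ T ih =>
      have hT3 : (0:ℝ) < (T:ℝ) + 3 := by positivity
      have hspos : 0 < Real.sqrt ((T:ℝ) + 3) := Real.sqrt_pos.mpr hT3
      have hpow : (2 / ((T:ℝ) + 3)) ^ ((3:ℝ)/2) =
          2 * Real.sqrt 2 / (((T:ℝ) + 3) * Real.sqrt ((T:ℝ) + 3)) := by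
        rw [rpow32_eq _ (by positivity),
          Real.sqrt_div (by norm_num : (0:ℝ) ≤ 2)]
        field_simp
      have hrecT := hrec T
      rw [hpow] at hrecT
      have hmul : ((T:ℝ) + 3) * ((T:ℝ) + 2) * Δ (T + 1) ≤
          ((T:ℝ) + 2) * ((T:ℝ) + 1) * Δ T +
            K * (2 * Real.sqrt 2) * (((T:ℝ) + 2) / Real.sqrt ((T:ℝ) + 3)) := by
        have h := mul_le_mul_of_nonneg_left hrecT
          (le_of_lt (by positivity : (0:ℝ) < ((T:ℝ) + 3) * ((T:ℝ) + 2)))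
        calc ((T:ℝ) + 3) * ((T:ℝ) + 2) * Δ (T + 1)
            ≤ ((T:ℝ) + 3) * ((T:ℝ) + 2) *
              ((1 - 2 / ((T:ℝ) + 3)) * Δ T +
                K * (2 * Real.sqrt 2 / (((T:ℝ) + 3) * Real.sqrt ((T:ℝ) + 3)))) := h
          _ = ((T:ℝ) + 2) * ((T:ℝ) + 1) * Δ T +
              K * (2 * Real.sqrt 2) * (((T:ℝ) + 2) / Real.sqrt ((T:ℝ) + 3)) := by
              field_simp
              ring
      have hks := mul_le_mul_of_nonneg_left (key_step T)
        (by positivity : (0:ℝ) ≤ K * (2 * Real.sqrt 2))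
      push_cast
      rw [show (T:ℝ) + 1 + 3 = (T:ℝ) + 4 from by ring]
      nlinarith [hmul, ih, hks]
  intro T hT
  have hTpos : (0:ℝ) < ((T:ℝ) + 2) * ((T:ℝ) + 1) := by positivity
  have hH := H T
  rw [rpow32_eq _ (by positivity : (0:ℝ) ≤ (T:ℝ) + 3), ← add_div,
    le_div_iff₀ hTpos]
  have hpos : (0:ℝ) ≤ K * (4 * Real.sqrt 2 / 3) * (3 * Real.sqrt 3) := by positivity
  nlinarith [hH]
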